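/- For the Werner state σ_p with p ∈ [0,1), one has S(σ_p) ≥ 1 (equivalently σ_p ∈ ACVENN) if and only if 3(1−p)log₂(1−p) + (1+3p)log₂(1+3p) ≤ 4. In particular the eigenvalues of σ_p are (1+3p)/4 with multiplicity one and (1−p)/4 with multiplicity three. -/

import Mathlib

open Matrix Finset
open scoped Kronecker ComplexOrder Classical

noncomputable section

/-- A quantum state: positive semidefinite matrix of trace 1. -/
def IsState {n : ℕ} (ρ : Matrix (Fin n) (Fin n) ℂ) : Prop :=
  ρ.PosSemidef ∧ ρ.trace = 1

/-- Von Neumann entropy `S(ρ) = -∑ᵢ λᵢ log₂ λᵢ` over the eigenvalues of `ρ`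
(with the convention `0 · log₂ 0 = 0`, which holds since `Real.logb 2 0 = 0`). -/
noncomputable def vnEntropy {n : ℕ} (ρ : Matrix (Fin n) (Fin n) ℂ) : ℝ :=
  if h : ρ.IsHermitian then -∑ i, h.eigenvalues i * Real.logb 2 (h.eigenvalues i) else 0

/-- Reduced state `ρ_A`: partial trace over the second tensor factor,
using the ordered product basis `|00⟩,|01⟩,|10⟩,|11⟩`, i.e. `|ab⟩ ↦ 2a+b`. -/
def ptraceB (ρ : Matrix (Fin 4) (Fin 4) ℂ) : Matrix (Fin 2) (Fin 2) ℂ :=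
  Matrix.of fun i j => ∑ k : Fin 2,
    ρ ⟨2 * i.val + k.val, by omega⟩ ⟨2 * j.val + k.val, by omega⟩

/-- Reduced state `ρ_B`: partial trace over the first tensor factor. -/
def ptraceA (ρ : Matrix (Fin 4) (Fin 4) ℂ) : Matrix (Fin 2) (Fin 2) ℂ :=
  Matrix.of fun i j => ∑ k : Fin 2,
    ρ ⟨2 * k.val + i.val, by omega⟩ ⟨2 * k.val + j.val, by omega⟩

/-- Conditional von Neumann entropy `S(A|B) = S(ρ_AB) - S(ρ_A)`. -/
def condEntropy (ρ : Matrix (Fin 4) (Fin 4) ℂ) : ℝ :=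
  vnEntropy ρ - vnEntropy (ptraceB ρ)

/-- Rank-one projector `|v⟩⟨v|`. -/
def proj (v : Fin 4 → ℂ) : Matrix (Fin 4) (Fin 4) ℂ := Matrix.vecMulVec v (star v)

/-- The Bell basis `|φ⁺⟩, |φ⁻⟩, |ψ⁺⟩, |ψ⁻⟩`. -/
noncomputable def bell : Fin 4 → Fin 4 → ℂ :=
  ![![(Real.sqrt 2 : ℂ)⁻¹, 0, 0, (Real.sqrt 2 : ℂ)⁻¹],
    ![(Real.sqrt 2 : ℂ)⁻¹, 0, 0, -(Real.sqrt 2 : ℂ)⁻¹],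
    ![0, (Real.sqrt 2 : ℂ)⁻¹, (Real.sqrt 2 : ℂ)⁻¹, 0],
    ![0, (Real.sqrt 2 : ℂ)⁻¹, -(Real.sqrt 2 : ℂ)⁻¹, 0]]

/-- Kronecker product of two one-qubit matrices as a `4 × 4` matrix,
with the index identification `(a,b) ↦ 2a+b`. -/
def kron (A B : Matrix (Fin 2) (Fin 2) ℂ) : Matrix (Fin 4) (Fin 4) ℂ :=
  Matrix.reindex finProdFinEquiv finProdFinEquiv (A ⊗ₖ B)

/-- The Werner state `σ_p = p|φ⁺⟩⟨φ⁺| + (1-p) I₄/4`. -/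
noncomputable def werner (p : ℝ) : Matrix (Fin 4) (Fin 4) ℂ :=
  (p : ℂ) • proj (bell 0) + (((1 - p) / 4 : ℝ) : ℂ) • 1

/-! ### Auxiliary lemmas -/

lemma trace_eq_sum_eigs {n : Type*} [Fintype n] [DecidableEq n] {A : Matrix n n ℂ}
    (hA : A.IsHermitian) : A.trace = ∑ i, (hA.eigenvalues i : ℂ) := by
  exact hA.trace_eq_sum_eigenvalues

lemma sum_eigs_real {n : Type*} [Fintype n] [DecidableEq n] {A : Matrix n n ℂ}
    (hA : A.IsHermitian) (htr : A.trace = 1) : ∑ i, hA.eigenvalues i = 1 := by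
  have h := (trace_eq_sum_eigs hA).symm.trans htr
  have : ((∑ i, hA.eigenvalues i : ℝ) : ℂ) = ((1 : ℝ) : ℂ) := by push_cast; simpa using h
  exact_mod_cast this

lemma sqrt2_sq : ((Real.sqrt 2 : ℂ))⁻¹ ^ 2 = (2 : ℂ)⁻¹ := by
  rw [← Complex.ofReal_inv, ← Complex.ofReal_pow, ← Real.sqrt_inv]
  norm_num [Real.sq_sqrt]

lemma sqrt2_sq' : ((Real.sqrt 2 : ℝ) : ℂ) ^ 2 = 2 := by
  rw [← Complex.ofReal_pow, Real.sq_sqrt (by norm_num : (0:ℝ) ≤ 2)]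
  norm_num

lemma werner_eq (p : ℝ) : werner p =
    !![(((1+p)/4 : ℝ) : ℂ), 0, 0, ((p/2 : ℝ) : ℂ); 0, (((1-p)/4 : ℝ) : ℂ), 0, 0;
       0, 0, (((1-p)/4 : ℝ) : ℂ), 0; ((p/2 : ℝ) : ℂ), 0, 0, (((1+p)/4 : ℝ) : ℂ)] := by
  ext i j
  fin_cases i <;> fin_cases j <;>
    (try simp [werner, proj, bell, Matrix.vecMulVec_apply, Matrix.one_apply, vecHead, -Matrix.cons_vecMulVec, -Matrix.vecMulVec_cons,
      vecTail]) <;>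
    (try push_cast) <;> (try ring_nf) <;> (try simp [sqrt2_sq, sqrt2_sq']) <;>
    (try push_cast) <;> (try rfl) <;> (try ring)

lemma werner_herm (p : ℝ) : (werner p).IsHermitian := by
  unfold Matrix.IsHermitian
  ext i j
  simp [werner, proj, Matrix.conjTranspose_apply, Matrix.vecMulVec_apply, Matrix.one_apply,
    star_mul', star_star, Complex.star_def, Complex.conj_ofReal, eq_comm,
    apply_ite (starRingEnd ℂ), map_add, _root_.map_mul, map_neg, map_div₀, _root_.map_one,
    map_ofNat, mul_comm]

lemma werner_trace (p : ℝ) : (werner p).trace = 1 := by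
  rw [werner_eq, Matrix.trace]
  simp [Fin.sum_univ_four]
  push_cast
  ring

lemma det_werner (p : ℝ) (z : ℂ) :
    Matrix.det (z • (1 : Matrix (Fin 4) (Fin 4) ℂ) - werner p)
    = (z - (((1+3*p)/4 : ℝ) : ℂ)) * (z - (((1-p)/4 : ℝ) : ℂ))^3 := by
  rw [werner_eq]
  simp [Matrix.det_succ_row_zero, Fin.sum_univ_succ, Matrix.one_apply, Fin.succ_ne_zero,
    show (Fin.succ 2 : Fin 4) = 3 from rfl, show (Fin.succ 0 : Fin 2) = 1 from rfl,
    show (Fin.castSucc 2 : Fin 4) = 2 from rfl, show (Fin.succ 1 : Fin 3) = 2 from rfl,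
    show (Fin.castSucc 0 : Fin 4) = 0 from rfl, show (Fin.castSucc 1 : Fin 4) = 1 from rfl]
  norm_num [Fin.succAbove, Fin.lt_def,
    show ((3 : Fin 4) : ℕ) = 3 from rfl, show ((2 : Fin 4) : ℕ) = 2 from rfl,
    show ((1 : Fin 4) : ℕ) = 1 from rfl, show ((0 : Fin 4) : ℕ) = 0 from rfl,
    show ((2 : Fin 3) : ℕ) = 2 from rfl, show ((1 : Fin 3) : ℕ) = 1 from rfl,
    show ((1 : Fin 2) : ℕ) = 1 from rfl, show Fin.castSucc (2 : Fin 3) = (2 : Fin 4) from rfl,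
    show Fin.castSucc (1 : Fin 3) = (1 : Fin 4) from rfl,
    show Fin.castSucc (0 : Fin 3) = (0 : Fin 4) from rfl]
  push_cast
  ring

/-- If `μ` lies in the real spectrum of `M` then `det ((μ:ℂ)•1 - M) = 0`. -/
lemma det_zero_of_mem_spectrum {n : Type*} [Fintype n] [DecidableEq n]
    {M : Matrix n n ℂ} {μ : ℝ} (hμ : μ ∈ spectrum ℝ M) :
    Matrix.det ((μ : ℂ) • (1 : Matrix n n ℂ) - M) = 0 := by
  rw [spectrum.mem_iff] at hμ
  have halg : algebraMap ℝ (Matrix n n ℂ) μ = (μ : ℂ) • (1 : Matrix n n ℂ) := by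
    rw [Algebra.algebraMap_eq_smul_one, ← smul_one_smul ℂ μ (1 : Matrix n n ℂ)]
    norm_num
  rw [halg] at hμ
  by_contra hdet
  exact hμ ((Matrix.isUnit_iff_isUnit_det _).mpr (isUnit_iff_ne_zero.mpr hdet))

lemma spec_root (p μ : ℝ) {M : Matrix (Fin 4) (Fin 4) ℂ}
    (hd : ∀ z : ℂ, Matrix.det (z • (1 : Matrix (Fin 4) (Fin 4) ℂ) - M)
      = (z - (((1+3*p)/4 : ℝ) : ℂ)) * (z - (((1-p)/4 : ℝ) : ℂ))^3)
    (hμ : μ ∈ spectrum ℝ M) : μ = (1+3*p)/4 ∨ μ = (1-p)/4 := by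
  have h0 := det_zero_of_mem_spectrum hμ
  rw [hd] at h0
  rcases mul_eq_zero.mp h0 with h | h
  · left
    have : ((μ : ℂ)) = (((1+3*p)/4 : ℝ) : ℂ) := by linear_combination h
    exact_mod_cast this
  · right
    have h' := pow_eq_zero_iff (n := 3) (by norm_num) |>.mp h
    have : ((μ : ℂ)) = (((1-p)/4 : ℝ) : ℂ) := by linear_combination h'
    exact_mod_cast this

/-- Eigenvalue structure of any Hermitian trace-one matrix whose characteristic
polynomial is that of the Werner state. -/
lemma eig_struct (p : ℝ) (hp : 0 ≤ p) {M : Matrix (Fin 4) (Fin 4) ℂ}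
    (hM : M.IsHermitian) (htr : M.trace = 1)
    (hd : ∀ z : ℂ, Matrix.det (z • (1 : Matrix (Fin 4) (Fin 4) ℂ) - M)
      = (z - (((1+3*p)/4 : ℝ) : ℂ)) * (z - (((1-p)/4 : ℝ) : ℂ))^3) :
    ∃ e : Fin 4, hM.eigenvalues e = (1+3*p)/4 ∧
      ∀ i : Fin 4, i ≠ e → hM.eigenvalues i = (1-p)/4 := by
  have hroot : ∀ i, hM.eigenvalues i = (1+3*p)/4 ∨ hM.eigenvalues i = (1-p)/4 :=
    fun i => spec_root p _ hd (hM.eigenvalues_mem_spectrum_real i)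
  rcases eq_or_lt_of_le hp with hp0 | hp0
  · -- p = 0 : both candidate eigenvalues coincide
    refine ⟨0, ?_, ?_⟩
    · rcases hroot 0 with h | h <;> rw [h] <;> rw [← hp0] <;> norm_num
    · intro i _
      rcases hroot i with h | h <;> rw [h] <;> rw [← hp0] <;> norm_num
  · have hsum := sum_eigs_real hM htr
    set T : Finset (Fin 4) := univ.filter (fun i => hM.eigenvalues i = (1+3*p)/4) with hT
    have hsplit : ∑ i ∈ T, hM.eigenvalues i + ∑ i ∈ univ.filter (fun i => ¬ hM.eigenvalues i = (1+3*p)/4), hM.eigenvalues i = 1 := by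
      rw [Finset.sum_filter_add_sum_filter_not]
      exact hsum
    have hTa : ∑ i ∈ T, hM.eigenvalues i = T.card * ((1+3*p)/4) := by
      rw [Finset.sum_congr rfl (fun i hi => (Finset.mem_filter.mp hi).2), Finset.sum_const,
        nsmul_eq_mul]
    have hTb : ∑ i ∈ univ.filter (fun i => ¬ hM.eigenvalues i = (1+3*p)/4), hM.eigenvalues i
        = (univ.filter (fun i => ¬ hM.eigenvalues i = (1+3*p)/4)).card * ((1-p)/4) := by
      have hconst : ∀ i ∈ univ.filter (fun i => ¬ hM.eigenvalues i = (1+3*p)/4),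
          hM.eigenvalues i = (1-p)/4 := by
        intro i hi
        rcases hroot i with h | h
        · exact absurd h (Finset.mem_filter.mp hi).2
        · exact h
      rw [Finset.sum_congr rfl hconst, Finset.sum_const, nsmul_eq_mul]
    have hcards : T.card + (univ.filter (fun i => ¬ hM.eigenvalues i = (1+3*p)/4)).card = 4 := by
      rw [Finset.card_filter_add_card_filter_not]
      simp
    have hk : T.card = 1 := by
      set k := T.card
      set m := (univ.filter (fun i => ¬ hM.eigenvalues i = (1+3*p)/4)).card
      have h1 : (k : ℝ) * ((1+3*p)/4) + (m : ℝ) * ((1-p)/4) = 1 := by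
        rw [← hTa, ← hTb]; exact hsplit
      have h2 : (k : ℝ) + (m : ℝ) = 4 := by exact_mod_cast hcards
      have : (k : ℝ) = 1 := by nlinarith
      exact_mod_cast this
    obtain ⟨e, he⟩ := Finset.card_eq_one.mp hk
    refine ⟨e, ?_, ?_⟩
    · have : e ∈ T := he ▸ Finset.mem_singleton_self e
      exact (Finset.mem_filter.mp this).2
    · intro i hi
      rcases hroot i with h | h
      · exfalso
        have : i ∈ T := Finset.mem_filter.mpr ⟨Finset.mem_univ i, h⟩
        rw [he, Finset.mem_singleton] at this
        exact hi this
      · exact h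

/-- Entropy of a matrix with the Werner eigenvalue structure. -/
lemma entropy_formula (p : ℝ) {M : Matrix (Fin 4) (Fin 4) ℂ}
    (hM : M.IsHermitian) (e : Fin 4)
    (ha : hM.eigenvalues e = (1+3*p)/4)
    (hb : ∀ i : Fin 4, i ≠ e → hM.eigenvalues i = (1-p)/4) :
    vnEntropy M = -(((1+3*p)/4) * Real.logb 2 ((1+3*p)/4)
      + 3 * (((1-p)/4) * Real.logb 2 ((1-p)/4))) := by
  rw [vnEntropy, dif_pos hM]
  congr 1
  rw [← Finset.sum_erase_add _ _ (Finset.mem_univ e)]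
  have h1 : ∑ i ∈ univ.erase e, hM.eigenvalues i * Real.logb 2 (hM.eigenvalues i)
      = 3 * (((1-p)/4) * Real.logb 2 ((1-p)/4)) := by
    have hconst : ∀ i ∈ univ.erase e,
        hM.eigenvalues i * Real.logb 2 (hM.eigenvalues i)
          = ((1-p)/4) * Real.logb 2 ((1-p)/4) := fun i hi => by
      rw [hb i (Finset.mem_erase.mp hi).1]
    rw [Finset.sum_congr rfl hconst, Finset.sum_const,
      Finset.card_erase_of_mem (Finset.mem_univ e), Finset.card_univ, Fintype.card_fin,
      nsmul_eq_mul]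
    norm_num
  rw [h1, ha]
  ring

lemma logb_two_four : Real.logb 2 4 = 2 := by
  rw [show (4:ℝ) = 2^(2:ℕ) by norm_num, Real.logb_pow, Real.logb_self_eq_one] <;> norm_num

/-- The explicit entropy value, using `0 ≤ p < 1`. -/
lemma entropy_value (p : ℝ) (hp0 : 0 ≤ p) (hp1 : p < 1) {M : Matrix (Fin 4) (Fin 4) ℂ}
    (hM : M.IsHermitian) (e : Fin 4)
    (ha : hM.eigenvalues e = (1+3*p)/4)
    (hb : ∀ i : Fin 4, i ≠ e → hM.eigenvalues i = (1-p)/4) :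
    vnEntropy M = 2 - (3 * (1 - p) * Real.logb 2 (1 - p)
      + (1 + 3 * p) * Real.logb 2 (1 + 3 * p)) / 4 := by
  rw [entropy_formula p hM e ha hb]
  have hA : (0:ℝ) < 1 + 3*p := by linarith
  have hB : (0:ℝ) < 1 - p := by linarith
  rw [show ((1+3*p)/4 : ℝ) = (1+3*p)/4 from rfl]
  rw [Real.logb_div (ne_of_gt hA) (by norm_num), Real.logb_div (ne_of_gt hB) (by norm_num),
    logb_two_four]
  ring

/-- Hermiticity of the partial trace. -/
lemma ptraceB_herm {ρ : Matrix (Fin 4) (Fin 4) ℂ} (h : ρ.IsHermitian) :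
    (ptraceB ρ).IsHermitian := by
  have key : ∀ a b, star (ρ a b) = ρ b a := fun a b => by
    conv_rhs => rw [← h]
    simp [Matrix.conjTranspose_apply]
  unfold Matrix.IsHermitian
  ext i j
  simp [ptraceB, Matrix.conjTranspose_apply, key]

lemma ptraceB_trace (ρ : Matrix (Fin 4) (Fin 4) ℂ) : (ptraceB ρ).trace = ρ.trace := by
  rw [Matrix.trace, Matrix.trace]
  rw [Fin.sum_univ_four, Fin.sum_univ_two]
  simp [ptraceB, Matrix.diag, Fin.sum_univ_two,
    show (⟨2, by omega⟩ : Fin 4) = 2 from rfl, show (⟨3, by omega⟩ : Fin 4) = 3 from rfl]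
  ring

/-- Entropy of a 2×2 Hermitian matrix of trace one is at most 1. -/
lemma entropy_two_le_one {τ : Matrix (Fin 2) (Fin 2) ℂ} (h : τ.IsHermitian)
    (htr : τ.trace = 1) : vnEntropy τ ≤ 1 := by
  have hsum := sum_eigs_real h htr
  rw [Fin.sum_univ_two] at hsum
  rw [vnEntropy, dif_pos h, Fin.sum_univ_two]
  set x := h.eigenvalues 0
  have h1 : h.eigenvalues 1 = 1 - x := by linarith
  have hlog2 : (0:ℝ) < Real.log 2 := Real.log_pos (by norm_num)
  have key : -(x * Real.logb 2 x + h.eigenvalues 1 * Real.logb 2 (h.eigenvalues 1))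
      = Real.binEntropy x / Real.log 2 := by
    rw [h1, Real.binEntropy, Real.logb, Real.logb, Real.log_inv, Real.log_inv]
    field_simp
    ring
  rw [key]
  rw [div_le_one hlog2]
  exact Real.binEntropy_le_log_two

/-- The partial trace of the Werner state is `(1/2) • 1`. -/
lemma ptraceB_werner (p : ℝ) :
    ptraceB (werner p) = (((1/2 : ℝ)) : ℂ) • (1 : Matrix (Fin 2) (Fin 2) ℂ) := by
  rw [werner_eq]
  ext i j
  fin_cases i <;> fin_cases j <;>
    simp [ptraceB, Fin.sum_univ_two, Matrix.one_apply,
      show (⟨2, by omega⟩ : Fin 4) = 2 from rfl, show (⟨3, by omega⟩ : Fin 4) = 3 from rfl] <;>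
    push_cast <;> ring_nf <;> rfl

lemma det_half_one (z : ℂ) :
    Matrix.det (z • (1 : Matrix (Fin 2) (Fin 2) ℂ)
      - (((1/2 : ℝ)) : ℂ) • (1 : Matrix (Fin 2) (Fin 2) ℂ))
    = (z - (((1/2 : ℝ)) : ℂ))^2 := by
  rw [Matrix.det_fin_two]
  simp [Matrix.one_apply]
  ring

lemma eig_half {τ : Matrix (Fin 2) (Fin 2) ℂ}
    (hτ : τ = (((1/2 : ℝ)) : ℂ) • (1 : Matrix (Fin 2) (Fin 2) ℂ))
    (h : τ.IsHermitian) (i : Fin 2) : h.eigenvalues i = 1/2 := by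
  have hμ := h.eigenvalues_mem_spectrum_real i
  have h0 := det_zero_of_mem_spectrum hμ
  obtain ⟨x, hx⟩ : ∃ x : ℝ, x = h.eigenvalues i := ⟨_, rfl⟩
  rw [← hx] at h0 ⊢
  rw [hτ, det_half_one] at h0
  have h' := pow_eq_zero_iff (n := 2) (by norm_num) |>.mp h0
  have : ((x : ℂ)) = (((1/2 : ℝ)) : ℂ) := by linear_combination h'
  exact_mod_cast this

lemma entropy_ptraceB_werner (p : ℝ) : vnEntropy (ptraceB (werner p)) = 1 := by
  have hτ := ptraceB_werner p
  have h : (ptraceB (werner p)).IsHermitian := ptraceB_herm (werner_herm p)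
  rw [vnEntropy, dif_pos h, Fin.sum_univ_two, eig_half hτ h 0, eig_half hτ h 1]
  rw [show (1/2 : ℝ) = 2⁻¹ by norm_num, Real.logb_inv, Real.logb_self_eq_one] <;> norm_num

/-! ### Unitary conjugation -/

lemma conj_herm {U M : Matrix (Fin 4) (Fin 4) ℂ} (hM : M.IsHermitian) :
    (U * M * Uᴴ).IsHermitian := by
  unfold Matrix.IsHermitian
  rw [Matrix.conjTranspose_mul, Matrix.conjTranspose_mul, Matrix.conjTranspose_conjTranspose,
    hM.eq, Matrix.mul_assoc]

lemma conj_trace {U : Matrix (Fin 4) (Fin 4) ℂ} (hU : U ∈ Matrix.unitaryGroup (Fin 4) ℂ)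
    (M : Matrix (Fin 4) (Fin 4) ℂ) : (U * M * Uᴴ).trace = M.trace := by
  rw [Matrix.trace_mul_cycle]
  rw [show Uᴴ * U = 1 from Matrix.mem_unitaryGroup_iff'.mp hU, one_mul]

lemma conj_det {U : Matrix (Fin 4) (Fin 4) ℂ} (hU : U ∈ Matrix.unitaryGroup (Fin 4) ℂ)
    (M : Matrix (Fin 4) (Fin 4) ℂ) (z : ℂ) :
    Matrix.det (z • (1 : Matrix (Fin 4) (Fin 4) ℂ) - U * M * Uᴴ)
    = Matrix.det (z • (1 : Matrix (Fin 4) (Fin 4) ℂ) - M) := by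
  have hUU : U * Uᴴ = 1 := Matrix.mem_unitaryGroup_iff.mp hU
  have hstep : z • (1 : Matrix (Fin 4) (Fin 4) ℂ) - U * M * Uᴴ
      = U * (z • (1 : Matrix (Fin 4) (Fin 4) ℂ) - M) * Uᴴ := by
    rw [Matrix.mul_sub, Matrix.sub_mul, Matrix.mul_smul, Matrix.mul_one, Matrix.smul_mul, hUU]
  rw [hstep, Matrix.det_mul, Matrix.det_mul]
  have hdetU : U.det * Uᴴ.det = 1 := by
    rw [← Matrix.det_mul, hUU, Matrix.det_one]
  calc U.det * (z • (1 : Matrix (Fin 4) (Fin 4) ℂ) - M).det * Uᴴ.det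
      = (z • (1 : Matrix (Fin 4) (Fin 4) ℂ) - M).det * (U.det * Uᴴ.det) := by ring
    _ = _ := by rw [hdetU, mul_one]

/-! ### Main theorem -/

/-- For the Werner state `σ_p` with `p ∈ [0,1)`, `S(σ_p) ≥ 1`
(equivalently `σ_p ∈ ACVENN`) iff `3(1-p)log₂(1-p) + (1+3p)log₂(1+3p) ≤ 4`;
in particular the eigenvalues of `σ_p` are `(1+3p)/4` (multiplicity one) and
`(1-p)/4` (multiplicity three). -/
theorem stmt_9 (p : ℝ) (hp : p ∈ Set.Ico (0 : ℝ) 1) :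
    (1 ≤ vnEntropy (werner p) ↔
      3 * (1 - p) * Real.logb 2 (1 - p) + (1 + 3 * p) * Real.logb 2 (1 + 3 * p) ≤ 4) ∧
    ((∀ U ∈ Matrix.unitaryGroup (Fin 4) ℂ, 0 ≤ condEntropy (U * werner p * Uᴴ)) ↔
      3 * (1 - p) * Real.logb 2 (1 - p) + (1 + 3 * p) * Real.logb 2 (1 + 3 * p) ≤ 4) ∧
    (∃ h : (werner p).IsHermitian, ∃ e : Fin 4,
      h.eigenvalues e = (1 + 3 * p) / 4 ∧
      ∀ i : Fin 4, i ≠ e → h.eigenvalues i = (1 - p) / 4) := by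
  obtain ⟨hp0, hp1⟩ := hp
  have hM := werner_herm p
  obtain ⟨e, he, hrest⟩ := eig_struct p hp0 hM (werner_trace p) (det_werner p)
  have hS := entropy_value p hp0 hp1 hM e he hrest
  refine ⟨?_, ?_, ⟨hM, e, he, hrest⟩⟩
  · rw [hS]
    constructor <;> intro h <;> linarith
  · constructor
    · intro h
      have h1 := h 1 (one_mem _)
      rw [show (1 : Matrix (Fin 4) (Fin 4) ℂ) * werner p * (1 : Matrix (Fin 4) (Fin 4) ℂ)ᴴ
          = werner p by rw [Matrix.conjTranspose_one, one_mul, mul_one]] at h1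
      rw [condEntropy, entropy_ptraceB_werner p, hS] at h1
      linarith
    · intro h U hU
      have hM' := conj_herm (U := U) hM
      obtain ⟨e', he', hrest'⟩ := eig_struct p hp0 hM'
        (by rw [conj_trace hU, werner_trace])
        (fun z => by rw [conj_det hU, det_werner])
      have hS' := entropy_value p hp0 hp1 hM' e' he' hrest'
      have hB : vnEntropy (ptraceB (U * werner p * Uᴴ)) ≤ 1 :=
        entropy_two_le_one (ptraceB_herm hM')
          (by rw [ptraceB_trace, conj_trace hU, werner_trace])
      rw [condEntropy, hS']
      linarith
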